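/- Let d ≥ 1, n ≥ 1, let μ be a positive measure on ℝ^d, and let p_{n-2}, p_{n-1}, p_n, p_{n+1} be families of μ-square-integrable functions ℝ^d → ℝ of sizes r_{n-2}, r_{n-1}, r_n, r_{n+1} respectively (with p_{-1} the empty family) that are jointly orthonormal, i.e. ∫ p_m(x) p_k(x)^T dμ(x) = δ_{m,k} I for all m,k ∈ {n-2,n-1,n,n+1}. Suppose for both coordinates i and j (i,j ∈ {1,…,d}) the pointwise three-term relations hold at degrees n-1 and n: x_l p_{n-1}(x) = B_{n,l} p_n(x) + A_{n,l} p_{n-1}(x) + B_{n-1,l}^T p_{n-2}(x) and x_l p_n(x) = B_{n+1,l} p_{n+1}(x) + A_{n+1,l} p_n(x) + B_{n,l}^T p_{n-1}(x) for l ∈ {i,j}, with matrices of compatible sizes, and assume all products of the form x_i x_j p_{m,a} p_{k,b} and x_l p_{m,a} p_{k,b} appearing are μ-integrable. Then the second commuting condition holds: B_{n,i} A_{n+1,j} + A_{n,i} B_{n,j} = B_{n,j} A_{n+1,i} + A_{n,j} B_{n,i}. -/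

import Mathlib

open MeasureTheory

/-- `f` is an orthonormal family in `L²(μ)`. -/
def OrthoSelf {d r : ℕ} (μ : Measure (Fin d → ℝ)) (f : Fin r → (Fin d → ℝ) → ℝ) : Prop :=
  ∀ a b, ∫ x, f a x * f b x ∂μ = if a = b then (1 : ℝ) else 0

/-- The families `f` and `g` are mutually orthogonal in `L²(μ)`. -/
def OrthoCross {d r s : ℕ} (μ : Measure (Fin d → ℝ)) (f : Fin r → (Fin d → ℝ) → ℝ)
    (g : Fin s → (Fin d → ℝ) → ℝ) : Prop :=
  ∀ a b, ∫ x, f a x * g b x ∂μ = 0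

/-- All products of the form `x_i x_j f_a g_b`, `x_i f_a g_b`, `x_j f_a g_b`
are `μ`-integrable. -/
def ProdInt {d r s : ℕ} (μ : Measure (Fin d → ℝ)) (i j : Fin d)
    (f : Fin r → (Fin d → ℝ) → ℝ) (g : Fin s → (Fin d → ℝ) → ℝ) : Prop :=
  ∀ a b, Integrable (fun x => x i * x j * f a x * g b x) μ ∧
    Integrable (fun x => x i * f a x * g b x) μ ∧
    Integrable (fun x => x j * f a x * g b x) μ


theorem l2_mul_int {α : Type*} [MeasurableSpace α] {μ : Measure α} {f g : α → ℝ}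
    (hf : MemLp f 2 μ) (hg : MemLp g 2 μ) : Integrable (fun x => f x * g x) μ := by
  have h : MemLp (f • g) 1 μ := hg.smul (hpqr := ⟨by rw [ENNReal.inv_two_add_inv_two, inv_one]⟩) hf
  exact memLp_one_iff_integrable.mp h

/-- the second commuting condition for the
recurrence matrices of a jointly orthonormal family satisfying the three-term relations. -/
theorem commuting_condition_two
    (d n : ℕ) (hd : 1 ≤ d) (hn : 1 ≤ n)
    (rnm2 : ℕ) (rnm1 rn rnp1 : ℕ) (hrnm1 : 0 < rnm1) (hrn : 0 < rn) (hrnp1 : 0 < rnp1)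
    (μ : Measure (Fin d → ℝ))
    (pnm2 : Fin rnm2 → (Fin d → ℝ) → ℝ)
    (pnm1 : Fin rnm1 → (Fin d → ℝ) → ℝ)
    (pn : Fin rn → (Fin d → ℝ) → ℝ)
    (pnp1 : Fin rnp1 → (Fin d → ℝ) → ℝ)
    (hL2nm2 : ∀ a, MemLp (pnm2 a) 2 μ)
    (hL2nm1 : ∀ a, MemLp (pnm1 a) 2 μ)
    (hL2n : ∀ a, MemLp (pn a) 2 μ)
    (hL2np1 : ∀ a, MemLp (pnp1 a) 2 μ)
    (hON0 : OrthoSelf μ pnm2) (hON1 : OrthoSelf μ pnm1)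
    (hON2 : OrthoSelf μ pn) (hON3 : OrthoSelf μ pnp1)
    (hOC01 : OrthoCross μ pnm2 pnm1) (hOC02 : OrthoCross μ pnm2 pn)
    (hOC03 : OrthoCross μ pnm2 pnp1) (hOC12 : OrthoCross μ pnm1 pn)
    (hOC13 : OrthoCross μ pnm1 pnp1) (hOC23 : OrthoCross μ pn pnp1)
    (i j : Fin d)
    (An : Fin d → Matrix (Fin rnm1) (Fin rnm1) ℝ)
    (Bnm1 : Fin d → Matrix (Fin rnm2) (Fin rnm1) ℝ)
    (Bn : Fin d → Matrix (Fin rnm1) (Fin rn) ℝ)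
    (Anp1 : Fin d → Matrix (Fin rn) (Fin rn) ℝ)
    (Bnp1 : Fin d → Matrix (Fin rn) (Fin rnp1) ℝ)
    (httrnm1 : ∀ l ∈ ({i, j} : Set (Fin d)), ∀ (x : Fin d → ℝ) (k : Fin rnm1),
      x l * pnm1 k x =
        (∑ q, Bn l k q * pn q x) + (∑ a, An l k a * pnm1 a x) +
          (∑ a, Bnm1 l a k * pnm2 a x))
    (httrn : ∀ l ∈ ({i, j} : Set (Fin d)), ∀ (x : Fin d → ℝ) (k : Fin rn),
      x l * pn k x =
        (∑ q, Bnp1 l k q * pnp1 q x) + (∑ a, Anp1 l k a * pn a x) +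
          (∑ a, Bn l a k * pnm1 a x))
    (hint00 : ProdInt μ i j pnm2 pnm2) (hint01 : ProdInt μ i j pnm2 pnm1)
    (hint02 : ProdInt μ i j pnm2 pn) (hint03 : ProdInt μ i j pnm2 pnp1)
    (hint11 : ProdInt μ i j pnm1 pnm1) (hint12 : ProdInt μ i j pnm1 pn)
    (hint13 : ProdInt μ i j pnm1 pnp1) (hint22 : ProdInt μ i j pn pn)
    (hint23 : ProdInt μ i j pn pnp1) (hint33 : ProdInt μ i j pnp1 pnp1) :
    Bn i * Anp1 j + An i * Bn j = Bn j * Anp1 i + An j * Bn i := by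

  have hON2' : ∀ a b, ∫ x, pn a x * pn b x ∂μ = if a = b then (1:ℝ) else 0 := hON2
  have hOC12' : ∀ a b, ∫ x, pnm1 a x * pn b x ∂μ = 0 := hOC12
  have hOC02' : ∀ a b, ∫ x, pnm2 a x * pn b x ∂μ = 0 := hOC02
  have hOC01' : ∀ a b, ∫ x, pnm2 a x * pnm1 b x ∂μ = 0 := hOC01
  have hOC03' : ∀ a b, ∫ x, pnm2 a x * pnp1 b x ∂μ = 0 := hOC03
  have hil : i ∈ ({i, j} : Set (Fin d)) := Set.mem_insert _ _
  have hjl : j ∈ ({i, j} : Set (Fin d)) := Set.mem_insert_of_mem _ rfl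
  have hOC32 : ∀ a b, ∫ x, pnp1 a x * pn b x ∂μ = 0 := fun a b => by
    rw [show (fun x => pnp1 a x * pn b x) = fun x => pn b x * pnp1 a x from
      funext fun x => mul_comm _ _]
    exact hOC23 b a
  have stepA : ∀ l ∈ ({i, j} : Set (Fin d)), ∀ (q m : Fin rn),
      ∫ x, (x l * pn q x) * pn m x ∂μ = Anp1 l q m := by
    intro l hl q m
    have hpt : (fun x : Fin d → ℝ => (x l * pn q x) * pn m x) =
        fun x => (∑ c, Bnp1 l q c * (pnp1 c x * pn m x)) +
          (∑ c, Anp1 l q c * (pn c x * pn m x)) +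
          (∑ c, Bn l c q * (pnm1 c x * pn m x)) := by
      funext x
      rw [httrn l hl x q, add_mul, add_mul, Finset.sum_mul, Finset.sum_mul, Finset.sum_mul]
      congr 1
      · congr 1
        · exact Finset.sum_congr rfl fun _ _ => by ring
        · exact Finset.sum_congr rfl fun _ _ => by ring
      · exact Finset.sum_congr rfl fun _ _ => by ring
    have iA : Integrable (fun x => ∑ c, Bnp1 l q c * (pnp1 c x * pn m x)) μ :=
      integrable_finset_sum _ fun c _ => (l2_mul_int (hL2np1 c) (hL2n m)).const_mul _
    have iB : Integrable (fun x => ∑ c, Anp1 l q c * (pn c x * pn m x)) μ :=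
      integrable_finset_sum _ fun c _ => (l2_mul_int (hL2n c) (hL2n m)).const_mul _
    have iC : Integrable (fun x => ∑ c, Bn l c q * (pnm1 c x * pn m x)) μ :=
      integrable_finset_sum _ fun c _ => (l2_mul_int (hL2nm1 c) (hL2n m)).const_mul _
    have iAB : Integrable (fun x => (∑ c, Bnp1 l q c * (pnp1 c x * pn m x)) + (∑ c, Anp1 l q c * (pn c x * pn m x))) μ := iA.add iB
    rw [hpt, integral_add iAB iC, integral_add iA iB,
      integral_finset_sum _ (fun c _ => (l2_mul_int (hL2np1 c) (hL2n m)).const_mul _),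
      integral_finset_sum _ (fun c _ => (l2_mul_int (hL2n c) (hL2n m)).const_mul _),
      integral_finset_sum _ (fun c _ => (l2_mul_int (hL2nm1 c) (hL2n m)).const_mul _)]
    simp [MeasureTheory.integral_const_mul, hOC32, hON2', hOC12', Finset.sum_ite_eq']
  have stepB : ∀ l ∈ ({i, j} : Set (Fin d)), ∀ (a : Fin rnm1) (m : Fin rn),
      ∫ x, (x l * pnm1 a x) * pn m x ∂μ = Bn l a m := by
    intro l hl a m
    have hpt : (fun x : Fin d → ℝ => (x l * pnm1 a x) * pn m x) =
        fun x => (∑ c, Bn l a c * (pn c x * pn m x)) +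
          (∑ c, An l a c * (pnm1 c x * pn m x)) +
          (∑ c, Bnm1 l c a * (pnm2 c x * pn m x)) := by
      funext x
      rw [httrnm1 l hl x a, add_mul, add_mul, Finset.sum_mul, Finset.sum_mul, Finset.sum_mul]
      congr 1
      · congr 1
        · exact Finset.sum_congr rfl fun _ _ => by ring
        · exact Finset.sum_congr rfl fun _ _ => by ring
      · exact Finset.sum_congr rfl fun _ _ => by ring
    have iA : Integrable (fun x => ∑ c, Bn l a c * (pn c x * pn m x)) μ :=
      integrable_finset_sum _ fun c _ => (l2_mul_int (hL2n c) (hL2n m)).const_mul _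
    have iB : Integrable (fun x => ∑ c, An l a c * (pnm1 c x * pn m x)) μ :=
      integrable_finset_sum _ fun c _ => (l2_mul_int (hL2nm1 c) (hL2n m)).const_mul _
    have iC : Integrable (fun x => ∑ c, Bnm1 l c a * (pnm2 c x * pn m x)) μ :=
      integrable_finset_sum _ fun c _ => (l2_mul_int (hL2nm2 c) (hL2n m)).const_mul _
    have iAB : Integrable (fun x => (∑ c, Bn l a c * (pn c x * pn m x)) + (∑ c, An l a c * (pnm1 c x * pn m x))) μ := iA.add iB
    rw [hpt, integral_add iAB iC, integral_add iA iB,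
      integral_finset_sum _ (fun c _ => (l2_mul_int (hL2n c) (hL2n m)).const_mul _),
      integral_finset_sum _ (fun c _ => (l2_mul_int (hL2nm1 c) (hL2n m)).const_mul _),
      integral_finset_sum _ (fun c _ => (l2_mul_int (hL2nm2 c) (hL2n m)).const_mul _)]
    simp [MeasureTheory.integral_const_mul, hON2', hOC12', hOC02', Finset.sum_ite_eq']
  have stepC : ∀ l ∈ ({i, j} : Set (Fin d)), ∀ (a : Fin rnm2) (m : Fin rn),
      ∫ x, (x l * pnm2 a x) * pn m x ∂μ = 0 := by
    intro l hl a m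
    have hpt : (fun x : Fin d → ℝ => (x l * pnm2 a x) * pn m x) =
        fun x => (∑ c, Bnp1 l m c * (pnm2 a x * pnp1 c x)) +
          (∑ c, Anp1 l m c * (pnm2 a x * pn c x)) +
          (∑ c, Bn l c m * (pnm2 a x * pnm1 c x)) := by
      funext x
      calc (x l * pnm2 a x) * pn m x = pnm2 a x * (x l * pn m x) := by ring
        _ = pnm2 a x * ((∑ c, Bnp1 l m c * pnp1 c x) + (∑ c, Anp1 l m c * pn c x) +
            (∑ c, Bn l c m * pnm1 c x)) := by rw [httrn l hl x m]
        _ = _ := by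
            rw [mul_add, mul_add, Finset.mul_sum, Finset.mul_sum, Finset.mul_sum]
            congr 1
            · congr 1
              · exact Finset.sum_congr rfl fun _ _ => by ring
              · exact Finset.sum_congr rfl fun _ _ => by ring
            · exact Finset.sum_congr rfl fun _ _ => by ring
    have iA : Integrable (fun x => ∑ c, Bnp1 l m c * (pnm2 a x * pnp1 c x)) μ :=
      integrable_finset_sum _ fun c _ => (l2_mul_int (hL2nm2 a) (hL2np1 c)).const_mul _
    have iB : Integrable (fun x => ∑ c, Anp1 l m c * (pnm2 a x * pn c x)) μ :=
      integrable_finset_sum _ fun c _ => (l2_mul_int (hL2nm2 a) (hL2n c)).const_mul _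
    have iC : Integrable (fun x => ∑ c, Bn l c m * (pnm2 a x * pnm1 c x)) μ :=
      integrable_finset_sum _ fun c _ => (l2_mul_int (hL2nm2 a) (hL2nm1 c)).const_mul _
    have iAB : Integrable (fun x => (∑ c, Bnp1 l m c * (pnm2 a x * pnp1 c x)) + (∑ c, Anp1 l m c * (pnm2 a x * pn c x))) μ := iA.add iB
    rw [hpt, integral_add iAB iC, integral_add iA iB,
      integral_finset_sum _ (fun c _ => (l2_mul_int (hL2nm2 a) (hL2np1 c)).const_mul _),
      integral_finset_sum _ (fun c _ => (l2_mul_int (hL2nm2 a) (hL2n c)).const_mul _),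
      integral_finset_sum _ (fun c _ => (l2_mul_int (hL2nm2 a) (hL2nm1 c)).const_mul _)]
    simp [MeasureTheory.integral_const_mul, hOC03', hOC02', hOC01']
  have hx2 : ∀ l ∈ ({i, j} : Set (Fin d)), ∀ (q : Fin rn) (m : Fin rn),
      Integrable (fun x => (x l * pn q x) * pn m x) μ := by
    intro l hl q m
    simp only [Set.mem_insert_iff, Set.mem_singleton_iff] at hl
    rcases hl with rfl | rfl
    · exact (hint22 q m).2.1
    · exact (hint22 q m).2.2
  have hx1 : ∀ l ∈ ({i, j} : Set (Fin d)), ∀ (a : Fin rnm1) (m : Fin rn),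
      Integrable (fun x => (x l * pnm1 a x) * pn m x) μ := by
    intro l hl a m
    simp only [Set.mem_insert_iff, Set.mem_singleton_iff] at hl
    rcases hl with rfl | rfl
    · exact (hint12 a m).2.1
    · exact (hint12 a m).2.2
  have hx0 : ∀ l ∈ ({i, j} : Set (Fin d)), ∀ (a : Fin rnm2) (m : Fin rn),
      Integrable (fun x => (x l * pnm2 a x) * pn m x) μ := by
    intro l hl a m
    simp only [Set.mem_insert_iff, Set.mem_singleton_iff] at hl
    rcases hl with rfl | rfl
    · exact (hint02 a m).2.1
    · exact (hint02 a m).2.2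
  have key : ∀ l1 ∈ ({i, j} : Set (Fin d)), ∀ l2 ∈ ({i, j} : Set (Fin d)),
      ∀ (k : Fin rnm1) (m : Fin rn),
      ∫ x, x l1 * x l2 * pnm1 k x * pn m x ∂μ =
        (∑ q, Bn l1 k q * Anp1 l2 q m) + (∑ a, An l1 k a * Bn l2 a m) := by
    intro l1 h1 l2 h2 k m
    have hpt : (fun x : Fin d → ℝ => x l1 * x l2 * pnm1 k x * pn m x) =
        fun x => (∑ c, Bn l1 k c * ((x l2 * pn c x) * pn m x)) +
          (∑ c, An l1 k c * ((x l2 * pnm1 c x) * pn m x)) +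
          (∑ c, Bnm1 l1 c k * ((x l2 * pnm2 c x) * pn m x)) := by
      funext x
      calc x l1 * x l2 * pnm1 k x * pn m x
          = (x l1 * pnm1 k x) * (x l2 * pn m x) := by ring
        _ = ((∑ c, Bn l1 k c * pn c x) + (∑ c, An l1 k c * pnm1 c x) +
            (∑ c, Bnm1 l1 c k * pnm2 c x)) * (x l2 * pn m x) := by rw [httrnm1 l1 h1 x k]
        _ = _ := by
            rw [add_mul, add_mul, Finset.sum_mul, Finset.sum_mul, Finset.sum_mul]
            congr 1
            · congr 1
              · exact Finset.sum_congr rfl fun _ _ => by ring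
              · exact Finset.sum_congr rfl fun _ _ => by ring
            · exact Finset.sum_congr rfl fun _ _ => by ring
    have iA : Integrable (fun x => ∑ c, Bn l1 k c * ((x l2 * pn c x) * pn m x)) μ :=
      integrable_finset_sum _ fun c _ => (hx2 l2 h2 c m).const_mul _
    have iB : Integrable (fun x => ∑ c, An l1 k c * ((x l2 * pnm1 c x) * pn m x)) μ :=
      integrable_finset_sum _ fun c _ => (hx1 l2 h2 c m).const_mul _
    have iC : Integrable (fun x => ∑ c, Bnm1 l1 c k * ((x l2 * pnm2 c x) * pn m x)) μ :=
      integrable_finset_sum _ fun c _ => (hx0 l2 h2 c m).const_mul _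
    have iAB : Integrable (fun x => (∑ c, Bn l1 k c * ((x l2 * pn c x) * pn m x)) + (∑ c, An l1 k c * ((x l2 * pnm1 c x) * pn m x))) μ := iA.add iB
    rw [hpt, integral_add iAB iC, integral_add iA iB,
      integral_finset_sum _ (fun c _ => (hx2 l2 h2 c m).const_mul _),
      integral_finset_sum _ (fun c _ => (hx1 l2 h2 c m).const_mul _),
      integral_finset_sum _ (fun c _ => (hx0 l2 h2 c m).const_mul _)]
    simp [MeasureTheory.integral_const_mul, stepA l2 h2, stepB l2 h2, stepC l2 h2]
  ext k m
  have h1 := key i hil j hjl k m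
  have h2 := key j hjl i hil k m
  have hsame : ∫ x, x i * x j * pnm1 k x * pn m x ∂μ =
      ∫ x, x j * x i * pnm1 k x * pn m x ∂μ := by
    rw [show (fun x : Fin d → ℝ => x i * x j * pnm1 k x * pn m x) =
      fun x => x j * x i * pnm1 k x * pn m x from funext fun x => by ring]
  simp only [Matrix.add_apply, Matrix.mul_apply]
  rw [← h1, ← h2, hsame]
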